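/- Let n ≥ 2, and let ℤ^n carry the standard action of S_n permuting the basis elements e_1,...,e_n. Let V be a finite abelian group equipped with an S_n-action and let φ : ℤ^n → V be an S_n-equivariant surjective homomorphism. Then either the restriction of φ to ℤ^{n-1} × {0} (the span of e_1,...,e_{n-1}) is surjective, or V has order at least 2^n and cannot be generated by fewer than n elements. -/

import Mathlib

private theorem hom_eq_sum_single {n : ℕ} {M : Type} [AddCommGroup M]
    (f : (Fin n → ℤ) →+ M) (x : Fin n → ℤ) :
    f x = ∑ i, x i • f (Pi.single i 1) := by
  have hx : x = ∑ i, x i • Pi.single i (1:ℤ) := by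
    funext j; simp [Pi.single_apply]
  calc f x = f (∑ i, x i • Pi.single i (1:ℤ)) := by rw [← hx]
  _ = ∑ i, x i • f (Pi.single i 1) := by
      rw [map_sum]
      exact Finset.sum_congr rfl fun i _ => map_zsmul f _ _

theorem equivariant_epi_dichotomy
    (n : ℕ) (hn : 2 ≤ n) (V : Type) [AddCommGroup V] [Fintype V]
    [DistribMulAction (Equiv.Perm (Fin n)) V]
    (φ : (Fin n → ℤ) →+ V) (hsurj : Function.Surjective φ)
    (hequiv : ∀ (σ : Equiv.Perm (Fin n)) (x : Fin n → ℤ),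
      φ (fun i => x (σ⁻¹ i)) = σ • φ x) :
    (∀ v : V, ∃ x : Fin n → ℤ,
        x ⟨n - 1, by omega⟩ = 0 ∧ φ x = v) ∨
      (2 ^ n ≤ Fintype.card V ∧
        ∀ s : Finset V, AddSubgroup.closure (s : Set V) = ⊤ → n ≤ s.card) := by
  have hn0 : n - 1 < n := by omega
  set last : Fin n := ⟨n - 1, hn0⟩ with hlastdef
  set v : Fin n → V := fun i => φ (Pi.single i 1) with hv
  -- equivariance on basis images
  have hact : ∀ (σ : Equiv.Perm (Fin n)) (i : Fin n), σ • v i = v (σ i) := by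
    intro σ i
    rw [hv]
    simp only
    rw [← hequiv]
    congr 1
    funext j
    simp only [Pi.single_apply]
    congr 1
    rw [Equiv.Perm.inv_def, Equiv.symm_apply_eq, eq_comm]
  -- the v i generate V
  have hgen : AddSubgroup.closure (Set.range v) = ⊤ := by
    rw [eq_top_iff]
    intro w _
    obtain ⟨x, rfl⟩ := hsurj w
    rw [hom_eq_sum_single φ x]
    exact AddSubgroup.sum_mem _ fun i _ =>
      AddSubgroup.zsmul_mem _ (AddSubgroup.subset_closure (Set.mem_range_self i)) _
  set K : AddSubgroup (Fin n → ℤ) :=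
    (Pi.evalAddMonoidHom (fun _ : Fin n => ℤ) last).ker with hK
  by_cases hS : K.map φ = ⊤
  · left
    intro w
    have hw : w ∈ K.map φ := hS ▸ AddSubgroup.mem_top w
    obtain ⟨x, hx, rfl⟩ := hw
    exact ⟨x, hx, rfl⟩
  · right
    set H : AddSubgroup V := AddSubgroup.closure (v '' {i | i ≠ last}) with hH
    have hHle : H ≤ K.map φ := by
      rw [hH, AddSubgroup.closure_le]
      rintro _ ⟨i, hi, rfl⟩
      refine ⟨Pi.single i 1, ?_, rfl⟩
      simp only [SetLike.mem_coe, AddMonoidHom.mem_ker, Pi.evalAddMonoidHom_apply]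
      exact Pi.single_eq_of_ne (M := fun _ : Fin n => ℤ) (Ne.symm hi) 1
    have hHne : H ≠ ⊤ := fun h => hS (top_le_iff.1 (h ▸ hHle))
    set π : V →+ V ⧸ H := QuotientAddGroup.mk' H with hπ
    have hπs : Function.Surjective π := QuotientAddGroup.mk'_surjective H
    set q : V ⧸ H := π (v last) with hq
    have hπv : ∀ i, i ≠ last → π (v i) = 0 := by
      intro i hi
      rw [hπ, QuotientAddGroup.mk'_apply, QuotientAddGroup.eq_zero_iff]
      exact AddSubgroup.subset_closure ⟨i, hi, rfl⟩
    have hQgen : AddSubgroup.closure {q} = ⊤ := by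
      rw [eq_top_iff, ← AddSubgroup.map_top_of_surjective π hπs, ← hgen,
        AddMonoidHom.map_closure π, AddSubgroup.closure_le]
      rintro _ ⟨_, ⟨i, rfl⟩, rfl⟩
      by_cases hi : i = last
      · subst hi; exact AddSubgroup.subset_closure rfl
      · rw [hπv i hi]; exact AddSubgroup.zero_mem _
    have hq0 : q ≠ 0 := by
      intro h
      apply hHne
      rw [eq_top_iff]
      intro x _
      have hx : π x = 0 := by
        have : π x ∈ AddSubgroup.closure ({q} : Set (V ⧸ H)) := hQgen ▸ AddSubgroup.mem_top _
        rw [h, AddSubgroup.closure_singleton_zero] at this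
        exact this
      rwa [hπ, QuotientAddGroup.mk'_apply, QuotientAddGroup.eq_zero_iff] at hx
    have : Finite (V ⧸ H) := Finite.of_surjective π hπs
    set m : ℕ := addOrderOf q with hm
    have hm1 : m ≠ 1 := fun h => hq0 (AddMonoid.addOrderOf_eq_one_iff.1 h)
    set p : ℕ := m.minFac with hp
    have hpp : p.Prime := Nat.minFac_prime hm1
    haveI : Fact p.Prime := ⟨hpp⟩
    haveI : NeZero p := ⟨hpp.ne_zero⟩
    -- the hom ℤ →+ V ⧸ H
    set π2 : ℤ →+ V ⧸ H := zmultiplesHom (V ⧸ H) q with hπ2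
    have hπ2s : Function.Surjective π2 := by
      intro x
      have hx : x ∈ AddSubgroup.zmultiples q := by
        rw [AddSubgroup.zmultiples_eq_closure, hQgen]; trivial
      obtain ⟨k, hk⟩ := AddSubgroup.mem_zmultiples_iff.1 hx
      exact ⟨k, hk⟩
    have hker : π2.ker ≤ (Int.castAddHom (ZMod p)).ker := by
      intro k hk
      have hk' : k • q = 0 := hk
      have hd : (m : ℤ) ∣ k := by
        rwa [addOrderOf_dvd_iff_zsmul_eq_zero]
      have hpd : (p : ℤ) ∣ k := dvd_trans (Int.natCast_dvd_natCast.2 (Nat.minFac_dvd m)) hd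
      simpa [AddMonoidHom.mem_ker, ZMod.intCast_zmod_eq_zero_iff_dvd] using hpd
    set e := QuotientAddGroup.quotientKerEquivOfSurjective π2 hπ2s with he
    set g : (V ⧸ H) →+ ZMod p :=
      (QuotientAddGroup.lift π2.ker (Int.castAddHom (ZMod p)) hker).comp
        e.symm.toAddMonoidHom with hg
    have hgπ2 : ∀ k : ℤ, g (π2 k) = (k : ZMod p) := by
      intro k
      have h1 : e (QuotientAddGroup.mk k) = π2 k := rfl
      have h2 : e.symm (π2 k) = QuotientAddGroup.mk k := by
        rw [← h1, AddEquiv.symm_apply_apply]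
      rw [hg]
      simp [h2]
    have hgq : g q = 1 := by
      have : π2 (1 : ℤ) = q := one_zsmul q
      rw [← this, hgπ2]
      exact Int.cast_one
    set f : V →+ ZMod p := g.comp π with hf
    have hfv : ∀ i, f (v i) = if i = last then 1 else 0 := by
      intro i
      by_cases hi : i = last
      · subst hi
        rw [if_pos rfl]
        show g (π (v last)) = 1
        rw [← hq]
        exact hgq
      · simp only [hf, AddMonoidHom.comp_apply, hπv i hi, map_zero, if_neg hi]
    set fi : Fin n → (V →+ ZMod p) := fun i =>
      f.comp (DistribMulAction.toAddMonoidHom V (Equiv.swap i last)) with hfi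
    have hfiv : ∀ i j, fi i (v j) = if j = i then 1 else 0 := by
      intro i j
      rw [hfi]
      simp only [AddMonoidHom.comp_apply, DistribMulAction.toAddMonoidHom_apply]
      rw [hact, hfv]
      by_cases hj : j = i
      · subst hj; rw [Equiv.swap_apply_left, if_pos rfl, if_pos rfl]
      · rw [if_neg hj, if_neg]
        intro h
        apply hj
        have := congrArg (Equiv.swap i last) h
        rwa [Equiv.swap_apply_self, Equiv.swap_apply_right] at this
    set F : V →+ (Fin n → ZMod p) :=
      AddMonoidHom.mk' (fun x i => fi i x)
        (by intro a b; funext i; simp [map_add]) with hF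
    have hFv : ∀ j, F (v j) = Pi.single j 1 := by
      intro j
      funext i
      rw [hF]
      simp only [AddMonoidHom.mk'_apply]
      rw [hfiv, Pi.single_apply]
      simp [eq_comm]
    have hFsurj : Function.Surjective F := by
      intro y
      refine ⟨φ (fun j => ((y j).val : ℤ)), ?_⟩
      have := hom_eq_sum_single (F.comp φ) (fun j => ((y j).val : ℤ))
      simp only [AddMonoidHom.comp_apply] at this
      rw [this]
      funext i
      rw [Finset.sum_apply]
      have : ∀ j, (((y j).val : ℤ) • F (φ (Pi.single j 1))) i
          = ((y j).val : ℤ) • ((Pi.single j 1 : Fin n → ZMod p) i) := by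
        intro j
        rw [show φ (Pi.single j 1) = v j from rfl, hFv]
        rfl
      rw [Finset.sum_congr rfl fun j _ => this j]
      simp [Pi.single_apply, ZMod.natCast_val, ZMod.intCast_cast]
    constructor
    · calc (2:ℕ) ^ n ≤ p ^ n := Nat.pow_le_pow_left hpp.two_le n
      _ = Fintype.card (Fin n → ZMod p) := by simp [ZMod.card]
      _ ≤ Fintype.card V := Fintype.card_le_of_surjective F hFsurj
    · intro s hs
      have hclos : AddSubgroup.closure ((s.image F : Finset _) : Set (Fin n → ZMod p)) = ⊤ := by
        rw [Finset.coe_image, ← AddMonoidHom.map_closure, hs,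
          AddSubgroup.map_top_of_surjective F hFsurj]
      have hspan : Submodule.span (ZMod p) ((s.image F : Finset _) : Set (Fin n → ZMod p)) = ⊤ := by
        rw [eq_top_iff]
        intro x _
        have hx : x ∈ AddSubgroup.closure ((s.image F : Finset _) : Set (Fin n → ZMod p)) :=
          hclos ▸ AddSubgroup.mem_top x
        have hle : AddSubgroup.closure ((s.image F : Finset _) : Set (Fin n → ZMod p)) ≤
            (Submodule.span (ZMod p) ((s.image F : Finset _) : Set (Fin n → ZMod p))).toAddSubgroup :=
          AddSubgroup.closure_le _ |>.2 Submodule.subset_span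
        exact hle hx
      calc n = Module.finrank (ZMod p) (Fin n → ZMod p) := (Module.finrank_fin_fun (ZMod p)).symm
      _ = Module.finrank (ZMod p) (Submodule.span (ZMod p) ((s.image F : Finset _) : Set (Fin n → ZMod p))) := by
          rw [hspan, finrank_top]
      _ ≤ (s.image F).card := finrank_span_finset_le_card _
      _ ≤ s.card := Finset.card_image_le
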